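/- arXiv:1409.3855 — 2 statements merged into one kernel-verified Lean document; each statement's English description precedes it below -/
import Mathlib

section
/- Any two full segments of a finite sequence of nonnegative real numbers are either disjoint or comparable by inclusion. -/
/-- Minimum of the values `l i, ..., l j` (real-valued sequence). -/
noncomputable def segMin (l : ℕ → ℝ) (i j : ℕ) : ℝ :=
  (Finset.Icc i j).fold min (l i) l

/-- Neighborhood maximin parameter `m[i,j]`: the maximum of `min(l h, ..., l k)` over
subintervals `[h,k]` of `[1,n]` properly containing `[i,j]`, with value `0` if there
are none (in particular for `[i,j] = [1,n]`). -/
noncomputable def nmaxim (l : ℕ → ℝ) (n i j : ℕ) : ℝ :=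
  (((Finset.Icc 1 i) ×ˢ (Finset.Icc j n)).filter (fun p => p ≠ (i, j))).fold max 0
    (fun p => segMin l p.1 p.2)

/-- `[i,j]` is a full segment (island) of the sequence `l` restricted to `[1,n]`. -/
def IsFullSeg (l : ℕ → ℝ) (n i j : ℕ) : Prop :=
  1 ≤ i ∧ i ≤ j ∧ j ≤ n ∧ nmaxim l n i j < segMin l i j

lemma segMin_le (l : ℕ → ℝ) {i j k : ℕ} (hk : k ∈ Finset.Icc i j) :
    segMin l i j ≤ l k := by
  unfold segMin
  rw [Finset.fold_min_le]
  exact Or.inr ⟨k, hk, le_rfl⟩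

lemma le_segMin (l : ℕ → ℝ) {i j : ℕ} {c : ℝ} (hb : c ≤ l i)
    (h : ∀ k ∈ Finset.Icc i j, c ≤ l k) : c ≤ segMin l i j := by
  unfold segMin
  rw [Finset.le_fold_min]
  exact ⟨hb, h⟩

lemma segMin_le_nmaxim (l : ℕ → ℝ) {n i j h k : ℕ} (hh : 1 ≤ h) (hhi : h ≤ i)
    (hjk : j ≤ k) (hkn : k ≤ n) (hne : (h, k) ≠ (i, j)) :
    segMin l h k ≤ nmaxim l n i j := by
  unfold nmaxim
  rw [Finset.le_fold_max]
  refine Or.inr ⟨(h, k), ?_, le_rfl⟩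
  simp [Finset.mem_filter, Finset.mem_product, hh, hhi, hjk, hkn, hne]

lemma cross_absurd (l : ℕ → ℝ) (n : ℕ) {i j i' j' : ℕ}
    (h : IsFullSeg l n i j) (h' : IsFullSeg l n i' j')
    (hii' : i < i') (hjj' : j < j') (hij : i' ≤ j) : False := by
  obtain ⟨h1, h2, h3, h4⟩ := h
  obtain ⟨h1', h2', h3', h4'⟩ := h'
  set c := min (segMin l i j) (segMin l i' j') with hc
  have hcle : c ≤ segMin l i j' := by
    refine le_segMin l ?_ ?_
    · exact le_trans (min_le_left _ _) (segMin_le l (by simp [h2]))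
    · intro k hk
      simp only [Finset.mem_Icc] at hk
      rcases le_or_gt k j with hkj | hkj
      · exact le_trans (min_le_left _ _) (segMin_le l (by simp [hk.1, hkj]))
      · exact le_trans (min_le_right _ _)
          (segMin_le l (by simp [Finset.mem_Icc]; omega))
  have hm1 : segMin l i j' ≤ nmaxim l n i j :=
    segMin_le_nmaxim l h1 le_rfl (le_of_lt hjj') h3' (by simp; omega)
  have hm2 : segMin l i j' ≤ nmaxim l n i' j' :=
    segMin_le_nmaxim l h1 (le_of_lt hii') le_rfl h3' (by simp; omega)
  have : c < c := lt_min (lt_of_le_of_lt (hcle.trans hm1) h4)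
    (lt_of_le_of_lt (hcle.trans hm2) h4')
  exact lt_irrefl _ this

/-- Any two full segments of a finite sequence of nonnegative reals are disjoint or nested. -/
theorem full_segments_disjoint_or_nested (l : ℕ → ℝ) (n : ℕ)
    (hnonneg : ∀ k ∈ Finset.Icc 1 n, 0 ≤ l k)
    (i j i' j' : ℕ) (h : IsFullSeg l n i j) (h' : IsFullSeg l n i' j') :
    (Finset.Icc i j ∩ Finset.Icc i' j' = ∅) ∨
      Finset.Icc i j ⊆ Finset.Icc i' j' ∨ Finset.Icc i' j' ⊆ Finset.Icc i j := by
  by_contra hcon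
  push_neg at hcon
  obtain ⟨hne, hs1, hs2⟩ := hcon
  obtain ⟨k, hk⟩ := hne
  simp only [Finset.mem_inter, Finset.mem_Icc] at hk
  obtain ⟨⟨hik, hkj⟩, hi'k, hkj'⟩ := hk
  have h2 := h.2.1
  have h2' := h'.2.1
  have hA : ¬ (i' ≤ i ∧ j ≤ j') := by
    intro ⟨a, b⟩
    exact hs1 (Finset.Icc_subset_Icc a b)
  have hB : ¬ (i ≤ i' ∧ j' ≤ j) := by
    intro ⟨a, b⟩
    exact hs2 (Finset.Icc_subset_Icc a b)
  rcases lt_or_ge i i' with hii' | hii'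
  · have hjj' : j < j' := by omega
    exact absurd (cross_absurd l n h h' hii' hjj' (by omega)) not_false
  · rcases lt_or_ge i' i with hi'i | hi'i
    · have : j' < j := by omega
      exact absurd (cross_absurd l n h' h hi'i this (by omega)) not_false
    · omega
end

section
/- The number of full segments of a sequence l = (l_1, ..., l_n) of nonnegative reals is at most 2n - 1. -/
lemma exists_fold_min (s : Finset ℕ) (f : ℕ → ℝ) (b : ℝ) :
    s.fold min b f = b ∨ ∃ x ∈ s, s.fold min b f = f x := by
  induction s using Finset.induction with
  | empty => simp
  | insert _ _ ha ih =>
    rename_i a s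
    rw [Finset.fold_insert ha]
    rcases min_cases (f a) (s.fold min b f) with ⟨h1, _⟩ | ⟨h1, _⟩
    · exact Or.inr ⟨a, Finset.mem_insert_self a s, h1⟩
    · rw [h1]
      rcases ih with h | ⟨x, hx, h⟩
      · exact Or.inl h
      · exact Or.inr ⟨x, Finset.mem_insert_of_mem hx, h⟩

lemma segMin_exists (l : ℕ → ℝ) {i j : ℕ} (h : i ≤ j) :
    ∃ k ∈ Finset.Icc i j, segMin l i j = l k := by
  rcases exists_fold_min (Finset.Icc i j) l (l i) with h0 | ⟨x, hx, hfx⟩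
  · exact ⟨i, Finset.mem_Icc.2 ⟨le_rfl, h⟩, h0⟩
  · exact ⟨x, hx, hfx⟩

noncomputable def amin (l : ℕ → ℝ) (i j : ℕ) : ℕ :=
  if h : ∃ k ∈ Finset.Icc i j, segMin l i j = l k then h.choose else 0

lemma amin_spec (l : ℕ → ℝ) {i j : ℕ} (h : i ≤ j) :
    amin l i j ∈ Finset.Icc i j ∧ segMin l i j = l (amin l i j) := by
  have he := segMin_exists l (i := i) (j := j) h
  rw [amin, dif_pos he]
  exact ⟨he.choose_spec.1, he.choose_spec.2⟩

lemma le_nmaxim (l : ℕ → ℝ) {n i j h k : ℕ} (hh : 1 ≤ h) (hi : h ≤ i) (hj : j ≤ k)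
    (hk : k ≤ n) (hne : (h, k) ≠ (i, j)) : segMin l h k ≤ nmaxim l n i j := by
  unfold nmaxim
  rw [Finset.le_fold_max]
  refine Or.inr ⟨(h, k), ?_, le_rfl⟩
  simp only [Finset.mem_filter, Finset.mem_product, Finset.mem_Icc]
  exact ⟨⟨⟨hh, hi⟩, hj, hk⟩, hne⟩

lemma key_inj (l : ℕ → ℝ) (n : ℕ) (p q : ℕ × ℕ) (hp : IsFullSeg l n p.1 p.2)
    (hq : IsFullSeg l n q.1 q.2) (hle : p.1 ≤ q.1)
    (heq : amin l p.1 p.2 = amin l q.1 q.2) : p = q := by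
  obtain ⟨hp1, hp2, hp3, hp4⟩ := hp
  obtain ⟨hq1, hq2, hq3, hq4⟩ := hq
  obtain ⟨hap, hvp⟩ := amin_spec l hp2
  obtain ⟨haq, hvq⟩ := amin_spec l hq2
  rw [← heq] at haq hvq
  rw [Finset.mem_Icc] at hap haq
  have hvv : segMin l p.1 p.2 = segMin l q.1 q.2 := by rw [hvp, hvq]
  by_contra hne
  rcases le_or_gt q.2 p.2 with hc | hc
  · -- [q.1,q.2] ⊆ [p.1,p.2] properly
    have : segMin l p.1 p.2 ≤ nmaxim l n q.1 q.2 := by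
      apply le_nmaxim l hp1 hle hc hp3
      intro hcon
      exact hne (Prod.ext (congrArg Prod.fst hcon) (congrArg Prod.snd hcon))
    rw [hvv] at this
    exact absurd hq4 (not_lt.2 this)
  · -- crossing / extension to the right: use [p.1, q.2]
    have hne2 : (p.1, q.2) ≠ (p.1, p.2) := by
      intro hcon
      exact absurd (congrArg Prod.snd hcon) (Nat.ne_of_gt hc)
    have h1 : segMin l p.1 q.2 ≤ nmaxim l n p.1 p.2 :=
      le_nmaxim l hp1 le_rfl (le_of_lt hc) hq3 hne2
    have h2 : segMin l p.1 p.2 ≤ segMin l p.1 q.2 := by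
      obtain ⟨b, hb, hbv⟩ := segMin_exists l (le_trans hp2 (le_of_lt hc))
      rw [Finset.mem_Icc] at hb
      rw [hbv]
      rcases le_or_gt b p.2 with hbc | hbc
      · exact segMin_le l (Finset.mem_Icc.2 ⟨hb.1, hbc⟩)
      · have : segMin l q.1 q.2 ≤ l b :=
          segMin_le l (Finset.mem_Icc.2 ⟨le_trans haq.1 (le_trans hap.2 (le_of_lt hbc)), hb.2⟩)
        rw [← hvv] at this
        exact this
    exact absurd hp4 (not_lt.2 (le_trans h2 h1))

/-- A sequence of `n` nonnegative reals has at most `2n - 1` full segments. -/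
theorem card_full_segments_le (l : ℕ → ℝ) (n : ℕ)
    (hnonneg : ∀ k ∈ Finset.Icc 1 n, 0 ≤ l k) :
    {p : ℕ × ℕ | IsFullSeg l n p.1 p.2}.ncard ≤ 2 * n - 1 := by
  have hmain : {p : ℕ × ℕ | IsFullSeg l n p.1 p.2}.ncard ≤ n := by
    have h := Set.ncard_le_ncard_of_injOn (fun p : ℕ × ℕ => amin l p.1 p.2)
      (s := {p : ℕ × ℕ | IsFullSeg l n p.1 p.2}) (t := ↑(Finset.Icc 1 n))
      (fun p hp => by
        obtain ⟨hp1, hp2, hp3, _⟩ := hp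
        obtain ⟨hap, _⟩ := amin_spec l hp2
        rw [Finset.mem_Icc] at hap
        simp only [Finset.coe_Icc, Set.mem_Icc]
        exact ⟨le_trans hp1 hap.1, le_trans hap.2 hp3⟩)
      (fun p hp q hq heq => by
        rcases le_total p.1 q.1 with h | h
        · exact key_inj l n p q hp hq h heq
        · exact (key_inj l n q p hq hp h heq.symm).symm)
      (Finset.Icc 1 n).finite_toSet
    rwa [Set.ncard_coe_finset, Nat.card_Icc, Nat.add_sub_cancel] at h
  omega
end
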